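/- Let f be holomorphic and injective on an open set U ⊆ ℂ and z ∈ U. Then the function ζ ↦ f'(z)f'(ζ)/(f(ζ) − f(z))² − 1/(ζ − z)², defined for ζ ∈ U \ {z}, extends holomorphically across ζ = z, and its value at ζ = z equals Sf(z)/6, where Sf = f'''/f' − (3/2)(f''/f')². -/

import Mathlib

open Complex Set Filter Nat Metric
open scoped Topology Real


lemma coeff_eq_iteratedDeriv {f : ℂ → ℂ} {p : FormalMultilinearSeries ℂ ℂ ℂ} {z : ℂ}
    (hp : HasFPowerSeriesAt f p z) (n : ℕ) :
    (n ! : ℂ) * p.coeff n = iteratedDeriv n f z := by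
  obtain ⟨r, hr⟩ := hp
  have h := hr.factorial_smul (1 : ℂ) n
  rw [iteratedDeriv_eq_iteratedFDeriv, ← h, FormalMultilinearSeries.coeff, nsmul_eq_mul]
  norm_num


lemma deriv_ne_zero_of_injOn {U : Set ℂ} (hU : IsOpen U) {z : ℂ} (hz : z ∈ U)
    {f : ℂ → ℂ} (hf : DifferentiableOn ℂ f U) (hinj : Set.InjOn f U) :
    deriv f z ≠ 0 := by
  intro hd
  have A : AnalyticOnNhd ℂ f U := hf.analyticOnNhd hU
  have hFa : AnalyticAt ℂ (fun ζ => f ζ - f z) z := (A z hz).sub analyticAt_const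
  have hne : ¬ ∀ᶠ ζ in 𝓝 z, f ζ - f z = 0 := by
    intro hev
    have hev2 : ∀ᶠ ζ in 𝓝 z, f ζ - f z = 0 ∧ ζ ∈ U :=
      hev.and (hU.eventually_mem hz)
    obtain ⟨ε, hε, hball⟩ := Metric.eventually_nhds_iff.mp hev2
    set ζ : ℂ := z + (ε / 2 : ℝ) with hζ_def
    have hdist : dist ζ z < ε := by
      simp only [hζ_def, Complex.dist_eq, add_sub_cancel_left]
      rw [Complex.norm_real, Real.norm_eq_abs, abs_of_pos (by linarith)]
      linarith
    obtain ⟨h1, h2⟩ := hball hdist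
    have h3 : ζ = z := hinj h2 hz (sub_eq_zero.mp h1)
    have h4 : ((ε / 2 : ℝ) : ℂ) = 0 := by
      have := congrArg (· - z) h3
      simpa [hζ_def] using this
    have : (ε : ℝ) / 2 = 0 := by exact_mod_cast h4
    linarith
  obtain ⟨n, g, hg_an, hgz, hev⟩ := hFa.exists_eventuallyEq_pow_smul_nonzero_iff.mpr hne
  simp only [smul_eq_mul] at hev
  have hn0 : n ≠ 0 := by
    rintro rfl
    have h0 := hev.self_of_nhds
    simp at h0
    exact hgz h0.symm
  have hn1 : n ≠ 1 := by
    rintro rfl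
    have hder : deriv (fun ζ => f ζ - f z) z = deriv (fun ζ => (ζ - z) ^ 1 * g ζ) z :=
      Filter.EventuallyEq.deriv_eq hev
    have h1 : deriv (fun ζ => f ζ - f z) z = 0 := by
      rw [deriv_sub_const]; exact hd
    have h2 : HasDerivAt (fun ζ => (ζ - z) ^ 1 * g ζ) (1 * g z + (z - z) * deriv g z) z := by
      simpa [Pi.mul_def] using (((hasDerivAt_id z).sub_const z).mul hg_an.differentiableAt.hasDerivAt)
    have h3 : (0 : ℂ) = 1 * g z + (z - z) * deriv g z := by
      rw [← h1, hder, h2.deriv]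
    apply hgz
    simpa using h3.symm
  have hn2 : 2 ≤ n := by omega
  set c := g z with hc_def
  have hdiv_an : AnalyticAt ℂ (fun ζ => g ζ / c) z := hg_an.div analyticAt_const hgz
  have hlog_an : AnalyticAt ℂ (fun ζ => Complex.log (g ζ / c)) z := by
    apply hdiv_an.clog
    simp [← hc_def, div_self hgz, Complex.mem_slitPlane_iff]
  set ρ : ℂ → ℂ := fun ζ => Complex.exp ((Complex.log c + Complex.log (g ζ / c)) * (n : ℂ)⁻¹)
    with hρ_def
  have hρ_an : AnalyticAt ℂ ρ z := ((analyticAt_const.add hlog_an).mul analyticAt_const).cexp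
  have hg_ne_ev : ∀ᶠ ζ in 𝓝 z, g ζ ≠ 0 := hg_an.continuousAt.eventually_ne hgz
  have hρ_pow : ∀ᶠ ζ in 𝓝 z, ρ ζ ^ n = g ζ := by
    filter_upwards [hg_ne_ev] with ζ hζ
    have hn0' : (n : ℂ) ≠ 0 := Nat.cast_ne_zero.mpr hn0
    rw [hρ_def, ← Complex.exp_nat_mul]
    have h5 : (n : ℂ) * ((Complex.log c + Complex.log (g ζ / c)) * (n : ℂ)⁻¹)
        = Complex.log c + Complex.log (g ζ / c) := by field_simp
    rw [h5, Complex.exp_add, Complex.exp_log hgz, Complex.exp_log (div_ne_zero hζ hgz)]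
    field_simp
  set ψ : ℂ → ℂ := fun ζ => (ζ - z) * ρ ζ with hψ_def
  have hψ_an : AnalyticAt ℂ ψ z := (analyticAt_id.sub analyticAt_const).mul hρ_an
  have hψz : ψ z = 0 := by simp [hψ_def]
  have hev2 : ∀ᶠ ζ in 𝓝 z, f ζ - f z = ψ ζ ^ n := by
    filter_upwards [hev, hρ_pow] with ζ h1 h2
    rw [h1, hψ_def]
    rw [mul_pow, h2]
  rcases hψ_an.eventually_constant_or_nhds_le_map_nhds with hconst | hle
  · apply hne
    filter_upwards [hev2, hconst] with ζ h1 h2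
    rw [h1, h2, hψz, zero_pow hn0]
  · rw [hψz] at hle
    have hS : U ∩ {ζ | f ζ - f z = ψ ζ ^ n} ∈ 𝓝 z :=
      Filter.inter_mem (hU.mem_nhds hz) hev2
    have himg : ψ '' (U ∩ {ζ | f ζ - f z = ψ ζ ^ n}) ∈ 𝓝 (0 : ℂ) :=
      hle (Filter.image_mem_map hS)
    obtain ⟨δ, hδ, hball⟩ := Metric.mem_nhds_iff.mp himg
    set u : ℂ := ((δ / 2 : ℝ) : ℂ) with hu_def
    set ω : ℂ := Complex.exp (((2 * π / n : ℝ) : ℂ) * I) with hω_def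
    have hωabs : ‖ω‖ = 1 := Complex.norm_exp_ofReal_mul_I _
    have hu_abs : ‖u‖ = δ / 2 := by
      rw [hu_def, Complex.norm_real, Real.norm_eq_abs, abs_of_pos (by linarith)]
    have hu0 : u ≠ 0 := by
      simp only [hu_def, ne_eq, Complex.ofReal_eq_zero]
      intro h; linarith
    have hu_mem : u ∈ ball (0 : ℂ) δ := by
      simp only [mem_ball, Complex.dist_eq, sub_zero, hu_abs]; linarith
    have hv_mem : u * ω ∈ ball (0 : ℂ) δ := by
      simp only [mem_ball, Complex.dist_eq, sub_zero, norm_mul, hu_abs, hωabs, mul_one]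
      linarith
    obtain ⟨a, ha, hψa⟩ := hball hu_mem
    obtain ⟨b, hb, hψb⟩ := hball hv_mem
    have hn0' : (n : ℂ) ≠ 0 := Nat.cast_ne_zero.mpr hn0
    have hωn : ω ^ n = 1 := by
      rw [hω_def, ← Complex.exp_nat_mul]
      have h6 : (n : ℂ) * (((2 * π / n : ℝ) : ℂ) * I) = 2 * π * I := by
        push_cast
        rw [div_eq_mul_inv]
        field_simp
      rw [h6, Complex.exp_two_pi_mul_I]
    have hfab : f a = f b := by
      have h1 : f a - f z = u ^ n := by rw [ha.2, hψa]
      have h2 : f b - f z = u ^ n := by rw [hb.2, hψb, mul_pow, hωn, mul_one]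
      exact sub_left_inj.mp (h1.trans h2.symm)
    have hab : a = b := hinj ha.1 hb.1 hfab
    have huv : u = u * ω := by
      calc u = ψ a := hψa.symm
        _ = ψ b := by rw [hab]
        _ = u * ω := hψb
    have hω1 : ω = 1 := (mul_left_cancel₀ hu0 ((mul_one u).trans huv)).symm
    rw [hω_def, Complex.exp_eq_one_iff] at hω1
    obtain ⟨k, hk⟩ := hω1
    have hre : (2 * π / n : ℝ) = (k : ℝ) * (2 * π) := by
      have := congrArg Complex.im hk
      simpa using this
    have hπ : (0 : ℝ) < π := Real.pi_pos
    have hnR : (2 : ℝ) ≤ (n : ℝ) := by exact_mod_cast hn2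
    have hkn : (k : ℝ) * n = 1 := by
      have hn_ne : (n : ℝ) ≠ 0 := by linarith
      field_simp at hre
      nlinarith [hre]
    have hknZ : (k * n : ℤ) = 1 := by exact_mod_cast hkn
    have hdvd : (n : ℤ) ∣ 1 := ⟨k, by linarith [hknZ]⟩
    have := Int.le_of_dvd one_pos hdvd
    omega

/-- The squared half-order Grunsky kernel `f'(z)f'(ζ)/(f(ζ)-f(z))² - 1/(ζ-z)²`
extends holomorphically across `ζ = z` with value `Sf(z)/6`. -/
theorem stmt8 (U : Set ℂ) (hU : IsOpen U) (z : ℂ) (hz : z ∈ U)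
    (f : ℂ → ℂ) (hf : DifferentiableOn ℂ f U) (hinj : Set.InjOn f U) :
    ∃ E : ℂ → ℂ, DifferentiableOn ℂ E U ∧
      (∀ ζ ∈ U, ζ ≠ z →
        E ζ = deriv f z * deriv f ζ / (f ζ - f z) ^ 2 - 1 / (ζ - z) ^ 2) ∧
      E z = (deriv (deriv (deriv f)) z / deriv f z
        - (3 / 2) * (deriv (deriv f) z / deriv f z) ^ 2) / 6 := by
  have ha1 : deriv f z ≠ 0 := deriv_ne_zero_of_injOn hU hz hf hinj
  have A : AnalyticOnNhd ℂ f U := hf.analyticOnNhd hU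
  have A' : AnalyticOnNhd ℂ (deriv f) U := A.deriv
  have A'' : AnalyticOnNhd ℂ (deriv (deriv f)) U := A'.deriv
  obtain ⟨p, hp⟩ := A z hz
  set a1 := deriv f z with ha1_def
  set a2 := p.coeff 2 with ha2_def
  set a3 := p.coeff 3 with ha3_def
  have e2 : deriv (deriv f) z = 2 * a2 := by
    have h := coeff_eq_iteratedDeriv hp 2
    have h2 : iteratedDeriv 2 f = deriv (deriv f) := by simp [iteratedDeriv_eq_iterate]
    rw [h2] at h
    rw [← h]
    norm_num [Nat.factorial, ha2_def]
  have e3 : deriv (deriv (deriv f)) z = 6 * a3 := by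
    have h := coeff_eq_iteratedDeriv hp 3
    have h2 : iteratedDeriv 3 f = deriv (deriv (deriv f)) := by simp [iteratedDeriv_eq_iterate]
    rw [h2] at h
    rw [← h]
    norm_num [Nat.factorial, ha3_def]
  set g := dslope f z with hg_def
  have hgs : HasFPowerSeriesAt g p.fslope z := hp.has_fpower_series_dslope_fslope
  have hg_an : AnalyticAt ℂ g z := ⟨_, hgs⟩
  have hgz : g z = a1 := dslope_same f z
  have hg1 : deriv g z = a2 := by
    rw [hgs.deriv]
    exact p.coeff_fslope
  have hg2 : deriv (deriv g) z = 2 * a3 := by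
    have h := coeff_eq_iteratedDeriv hgs 2
    have h2 : iteratedDeriv 2 g = deriv (deriv g) := by simp [iteratedDeriv_eq_iterate]
    rw [h2, FormalMultilinearSeries.coeff_fslope] at h
    rw [← h]
    norm_num [Nat.factorial, ha3_def]
  have hgd : ∀ ζ ∈ U, DifferentiableAt ℂ g ζ := by
    intro ζ hζ
    rcases eq_or_ne ζ z with rfl | hne
    · exact hg_an.differentiableAt
    · exact (differentiableAt_dslope_of_ne hne).mpr (hf.differentiableAt (hU.mem_nhds hζ))
  have hgne : ∀ ζ ∈ U, g ζ ≠ 0 := by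
    intro ζ hζ
    rcases eq_or_ne ζ z with rfl | hne
    · rw [hgz]; exact ha1
    · rw [hg_def, dslope_of_ne f hne, slope_def_field]
      exact div_ne_zero (sub_ne_zero.mpr fun hfz => hne (hinj hζ hz hfz))
        (sub_ne_zero.mpr hne)
  set h := fun ζ => a1 * deriv f ζ - g ζ ^ 2 with hh_def
  have hh_an : AnalyticAt ℂ h z := (analyticAt_const.mul (A' z hz)).sub (hg_an.pow 2)
  have hhz : h z = 0 := by
    simp only [hh_def, hgz]
    rw [← ha1_def]
    ring
  have hh'z : deriv h z = 0 := by
    have h1 : HasDerivAt (fun w => deriv f w) (deriv (deriv f) z) z :=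
      ((A' z hz).differentiableAt).hasDerivAt
    have h2 : HasDerivAt g (deriv g z) z := hg_an.differentiableAt.hasDerivAt
    have h3 : HasDerivAt h (a1 * deriv (deriv f) z - 2 * g z ^ 1 * deriv g z) z := by
      simpa [Pi.pow_def, Pi.sub_def, hh_def] using (h1.const_mul a1).sub (h2.pow 2)
    rw [h3.deriv, e2, hg1, hgz]; ring
  have hderiv_h : Set.EqOn (deriv h) (fun ζ => a1 * deriv (deriv f) ζ - 2 * g ζ * deriv g ζ) U := by
    intro ζ hζ
    have h1 : HasDerivAt (fun w => deriv f w) (deriv (deriv f) ζ) ζ :=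
      ((A' ζ hζ).differentiableAt).hasDerivAt
    have h2 : HasDerivAt g (deriv g ζ) ζ := (hgd ζ hζ).hasDerivAt
    have h3 : HasDerivAt h (a1 * deriv (deriv f) ζ - 2 * g ζ ^ 1 * deriv g ζ) ζ := by
      simpa [Pi.pow_def, Pi.sub_def, hh_def] using (h1.const_mul a1).sub (h2.pow 2)
    simpa using h3.deriv
  obtain ⟨s, hs_mem, hs⟩ := hg_an.eventually_analyticAt.exists_mem
  have hdg_an : AnalyticAt ℂ (deriv g) z :=
    (AnalyticOnNhd.deriv hs) z (mem_of_mem_nhds hs_mem)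
  have hddh : deriv (deriv h) z = 2 * (a1 * a3 - a2 ^ 2) := by
    have hev : deriv h =ᶠ[𝓝 z] (fun ζ => a1 * deriv (deriv f) ζ - 2 * g ζ * deriv g ζ) :=
      Filter.eventuallyEq_of_mem (hU.mem_nhds hz) hderiv_h
    rw [hev.deriv_eq]
    have h1 : HasDerivAt (fun w => deriv (deriv f) w) (deriv (deriv (deriv f)) z) z :=
      ((A'' z hz).differentiableAt).hasDerivAt
    have h2 : HasDerivAt g (deriv g z) z := hg_an.differentiableAt.hasDerivAt
    have h3 : HasDerivAt (deriv g) (deriv (deriv g) z) z := hdg_an.differentiableAt.hasDerivAt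
    have h4 : HasDerivAt (fun ζ => a1 * deriv (deriv f) ζ - 2 * g ζ * deriv g ζ)
        (a1 * deriv (deriv (deriv f)) z
          - 2 * (deriv g z * deriv g z + g z * deriv (deriv g) z)) z := by
      have := (h1.const_mul a1).sub ((h2.mul h3).const_mul 2)
      simpa [mul_assoc, Pi.mul_def, Pi.sub_def] using this
    rw [h4.deriv, e3, hg1, hg2, hgz]; ring
  obtain ⟨q, hq⟩ := hh_an
  have hq2 : q.coeff 2 = a1 * a3 - a2 ^ 2 := by
    have hh := coeff_eq_iteratedDeriv hq 2
    have h2 : iteratedDeriv 2 h = deriv (deriv h) := by simp [iteratedDeriv_eq_iterate]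
    rw [h2, hddh] at hh
    have h36 : ((2 ! : ℕ) : ℂ) = 2 := by norm_num [Nat.factorial]
    rw [h36] at hh
    have := mul_left_cancel₀ (two_ne_zero (α := ℂ)) hh
    exact this
  set N := dslope (dslope h z) z with hN_def
  have hNs : HasFPowerSeriesAt (dslope h z) q.fslope z := hq.has_fpower_series_dslope_fslope
  have hNs2 : HasFPowerSeriesAt N q.fslope.fslope z := hNs.has_fpower_series_dslope_fslope
  have hN_an : AnalyticAt ℂ N z := ⟨_, hNs2⟩
  have hNz : N z = a1 * a3 - a2 ^ 2 := by
    rw [hN_def, dslope_same, hNs.deriv]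
    rw [show (q.fslope 1 fun _ => 1) = q.fslope.coeff 1 from rfl, q.coeff_fslope]
    exact hq2
  have hNd : ∀ ζ ∈ U, DifferentiableAt ℂ N ζ := by
    intro ζ hζ
    rcases eq_or_ne ζ z with rfl | hne
    · exact hN_an.differentiableAt
    · have hh_diff : DifferentiableAt ℂ h ζ :=
        (((A' ζ hζ).differentiableAt).const_mul a1).sub ((hgd ζ hζ).pow 2)
      exact (differentiableAt_dslope_of_ne hne).mpr
        ((differentiableAt_dslope_of_ne hne).mpr hh_diff)
  refine ⟨fun ζ => N ζ / g ζ ^ 2, ?_, ?_, ?_⟩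
  · intro ζ hζ
    exact ((hNd ζ hζ).div ((hgd ζ hζ).pow 2) (pow_ne_zero 2 (hgne ζ hζ))).differentiableWithinAt
  · intro ζ hζ hne
    have hgζ : g ζ = (f ζ - f z) / (ζ - z) := by rw [hg_def, dslope_of_ne f hne, slope_def_field]
    have hζz : ζ - z ≠ 0 := sub_ne_zero.mpr hne
    have hNζ : N ζ = h ζ / (ζ - z) ^ 2 := by
      rw [hN_def, dslope_of_ne _ hne, slope_def_field, dslope_of_ne _ hne, slope_def_field,
        dslope_same, hhz, hh'z]
      rw [sub_zero, sub_zero, div_div, ← sq]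
    have hfζ : f ζ - f z ≠ 0 := sub_ne_zero.mpr fun hfz => hne (hinj hζ hz hfz)
    have hhζ : h ζ = a1 * deriv f ζ - ((f ζ - f z) / (ζ - z)) ^ 2 := by
      simp only [hh_def]
      rw [hgζ]
    show N ζ / g ζ ^ 2 = _
    rw [hNζ, hhζ, hgζ]
    field_simp
  · show N z / g z ^ 2 = _
    rw [hNz, hgz, e2, e3, div_pow]
    rw [div_eq_div_iff (pow_ne_zero 2 ha1) (by norm_num : (6:ℂ) ≠ 0)]
    field_simp
    ring
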